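/- Fix integers n ≥ 2 and k with 2 ≤ k ≤ n^3. Define G_2 to be the cone over n^2 disjoint copies of the fan F_{n^4}, and for c ≥ 2 define G_{c+1} to be the cone over (k−1) disjoint copies of G_c. Then for every c ≥ 2, every c-colouring of G_c has a monochromatic component with at least k vertices. -/

import Mathlib

open SimpleGraph

universe u v

/-- The strong product of two simple graphs. -/
def StrongProd {α : Type u} {β : Type v} (G : SimpleGraph α) (H : SimpleGraph β) :
    SimpleGraph (α × β) where
  Adj x y := (x.1 = y.1 ∧ H.Adj x.2 y.2) ∨ (x.2 = y.2 ∧ G.Adj x.1 y.1) ∨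
    (G.Adj x.1 y.1 ∧ H.Adj x.2 y.2)
  symm := by
    constructor
    rintro x y (⟨h1, h2⟩ | ⟨h1, h2⟩ | ⟨h1, h2⟩)
    · exact Or.inl ⟨h1.symm, h2.symm⟩
    · exact Or.inr (Or.inl ⟨h1.symm, h2.symm⟩)
    · exact Or.inr (Or.inr ⟨h1.symm, h2.symm⟩)
  loopless := by
    constructor
    rintro x (⟨h1, h2⟩ | ⟨h1, h2⟩ | ⟨h1, h2⟩)
    · exact h2.ne rfl
    · exact h2.ne rfl
    · exact h1.ne rfl

/-- The fan graph `F_n`: a path on `n` vertices (vertices `1,…,n`) together with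
one dominant vertex (vertex `0`) adjacent to all path vertices. -/
def Fan (n : ℕ) : SimpleGraph (Fin (n + 1)) :=
  SimpleGraph.fromRel (fun u v => u = 0 ∨ u.val + 1 = v.val)

/-- The cone over `m` disjoint copies of `G`: `m` pairwise disjoint copies of `G`
together with one new vertex adjacent to every vertex of every copy. -/
def GraphCone {V : Type u} (m : ℕ) (G : SimpleGraph V) :
    SimpleGraph (Option (Fin m × V)) where
  Adj x y :=
    match x, y with
    | none, none => False
    | none, some _ => True
    | some _, none => True
    | some (i, _u), some (j, _v) => i = j ∧ G.Adj _u _v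
  symm := by
    constructor
    rintro (_ | ⟨i, u⟩) (_ | ⟨j, v⟩) h
    · exact h
    · trivial
    · trivial
    · exact ⟨h.1.symm, h.2.symm⟩
  loopless := by
    constructor
    rintro (_ | ⟨i, u⟩) h
    · exact h
    · exact h.2.ne rfl

/-- `G` has a tree-decomposition of width at most `t`. -/
def TreewidthLE {V : Type u} (G : SimpleGraph V) (t : ℕ) : Prop :=
  ∃ (ι : Type) (T : SimpleGraph ι) (W : ι → Finset V),
    T.IsTree ∧
    (∀ ⦃u v : V⦄, G.Adj u v → ∃ x, u ∈ W x ∧ v ∈ W x) ∧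
    (∀ v : V, (T.induce {x | v ∈ W x}).Connected) ∧
    (∀ x, (W x).card ≤ t + 1)

/-- A set of vertices is monochromatic under a colouring `f`. -/
def IsMonochromatic {V : Type u} {c : ℕ} (f : V → Fin c) (S : Finset V) : Prop :=
  ∀ u ∈ S, ∀ v ∈ S, f u = f v

/-- Every monochromatic component of the colouring `f` of `G` has at most `k` vertices. -/
def ClusterLE {V : Type u} {c : ℕ} (G : SimpleGraph V) (f : V → Fin c) (k : ℕ) : Prop :=
  ∀ S : Finset V, IsMonochromatic f S → (G.induce (S : Set V)).Connected → S.card ≤ k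

/-- Every monochromatic component of the colouring `f` of `G` has at most `b` vertices
(real-valued bound). -/
def ClusterLEReal {V : Type u} {c : ℕ} (G : SimpleGraph V) (f : V → Fin c) (b : ℝ) : Prop :=
  ∀ S : Finset V, IsMonochromatic f S → (G.induce (S : Set V)).Connected → (S.card : ℝ) ≤ b
/-- Vertex type of the recursively defined family: index `c` corresponds to `G_{c+2}`,
where `G_2` is the cone over `n²` copies of the fan `F_{n⁴}`, and `G_{c+1}` is the cone
over `k−1` copies of `G_c`. -/
def GVert (n k : ℕ) : ℕ → Type
  | 0 => Option (Fin (n ^ 2) × Fin (n ^ 4 + 1))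
  | c + 1 => Option (Fin (k - 1) × GVert n k c)

/-- The recursively defined family of graphs: `Gfam n k c` is `G_{c+2}`. -/
def Gfam (n k : ℕ) : (c : ℕ) → SimpleGraph (GVert n k c)
  | 0 => GraphCone (n ^ 2) (Fan (n ^ 4))
  | c + 1 => GraphCone (k - 1) (Gfam n k c)


/-! ### Auxiliary lemmas -/

instance instDecEqGVert (n k : ℕ) : ∀ c, DecidableEq (GVert n k c)
  | 0 => inferInstanceAs (DecidableEq (Option (Fin (n ^ 2) × Fin (n ^ 4 + 1))))
  | c + 1 =>
    letI := instDecEqGVert n k c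
    inferInstanceAs (DecidableEq (Option (Fin (k - 1) × GVert n k c)))

instance instFintypeGVert (n k : ℕ) : ∀ c, Fintype (GVert n k c)
  | 0 => inferInstanceAs (Fintype (Option (Fin (n ^ 2) × Fin (n ^ 4 + 1))))
  | c + 1 =>
    letI := instFintypeGVert n k c
    inferInstanceAs (Fintype (Option (Fin (k - 1) × GVert n k c)))

instance instDecNoneGVert0 (n k : ℕ) (x : GVert n k 0) : Decidable (x = none) :=
  instDecEqGVert n k 0 x none

instance instDecNoneGVertSucc (n k c : ℕ) (x : GVert n k (c + 1)) : Decidable (x = none) :=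
  instDecEqGVert n k (c + 1) x none

lemma connected_of_hub {V : Type u} (G : SimpleGraph V) (v : V) (h : ∀ u, G.Reachable v u) :
    G.Connected := by
  rw [connected_iff]
  exact ⟨fun a b => (h a).symm.trans (h b), ⟨v⟩⟩

lemma induce_image_connected {V : Type u} {W : Type v} [DecidableEq W] {G : SimpleGraph V}
    {H : SimpleGraph W} (φ : V → W) (hadj : ∀ ⦃a b⦄, G.Adj a b → H.Adj (φ a) (φ b))
    (S : Finset V) (hc : (G.induce (S : Set V)).Connected) :
    (H.induce ((S.image φ : Finset W) : Set W)).Connected := by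
  let F : G.induce (S : Set V) →g H.induce ((S.image φ : Finset W) : Set W) :=
    { toFun := fun x => ⟨φ x.1, by
        simp only [Finset.coe_image, Set.mem_image, Finset.mem_coe]
        exact ⟨x.1, x.2, rfl⟩⟩,
      map_rel' := by
        rintro ⟨a, ha⟩ ⟨b, hb⟩ h
        simp only [comap_adj] at h ⊢
        exact hadj h }
  refine SimpleGraph.Connected.map F ?_ hc
  rintro ⟨w, hw⟩
  simp only [Finset.coe_image, Set.mem_image, Finset.mem_coe] at hw
  obtain ⟨a, ha, rfl⟩ := hw
  exact ⟨⟨a, ha⟩, rfl⟩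

lemma cone_apex_case {m : ℕ} {V : Type u} [DecidableEq V] {G : SimpleGraph V} {C : ℕ}
    (f : Option (Fin m × V) → Fin C) (A : Finset (Option (Fin m × V)))
    (hA : ∀ x ∈ A, x ≠ none ∧ f x = f none) :
    IsMonochromatic f (insert none A) ∧
      ((GraphCone m G).induce ((insert none A : Finset _) : Set _)).Connected ∧
      (insert none A).card = A.card + 1 := by
  refine ⟨?_, ?_, ?_⟩
  · intro x hx y hy
    have hval : ∀ z ∈ insert none A, f z = f none := by
      intro z hz
      rcases Finset.mem_insert.mp hz with rfl | hz
      · rfl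
      · exact (hA z hz).2
    rw [hval x hx, hval y hy]
  · have hhub : (none : Option (Fin m × V)) ∈ ((insert none A : Finset _) : Set _) := by
      simp
    refine connected_of_hub _ ⟨none, hhub⟩ ?_
    rintro ⟨x, hx⟩
    rcases Finset.mem_insert.mp hx with rfl | hxA
    · exact SimpleGraph.Reachable.refl _
    · obtain ⟨p, rfl⟩ := Option.ne_none_iff_exists'.mp (hA x hxA).1
      refine SimpleGraph.Adj.reachable ?_
      show (GraphCone m G).Adj none (some p)
      trivial
  · rw [Finset.card_insert_of_notMem]
    intro h
    exact (hA none h).1 rfl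

lemma fan_interval_connected (N t L : ℕ) (hL : 0 < L)
    (pf : ∀ d : Fin L, t + 1 + d.val < N + 1) :
    ((Fan N).induce
      ((Finset.image (fun d : Fin L => (⟨t + 1 + d.val, pf d⟩ : Fin (N + 1))) Finset.univ :
        Finset (Fin (N + 1))) : Set (Fin (N + 1)))).Connected := by
  set S : Finset (Fin (N + 1)) :=
    Finset.image (fun d : Fin L => (⟨t + 1 + d.val, pf d⟩ : Fin (N + 1))) Finset.univ with hS
  have hmem : ∀ d : Fin L, (⟨t + 1 + d.val, pf d⟩ : Fin (N + 1)) ∈ (S : Set (Fin (N + 1))) := by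
    intro d
    simp [hS]
  have hreach : ∀ d : ℕ, ∀ hd : d < L,
      ((Fan N).induce (S : Set (Fin (N + 1)))).Reachable
        ⟨⟨t + 1 + 0, pf ⟨0, hL⟩⟩, hmem ⟨0, hL⟩⟩ ⟨⟨t + 1 + d, pf ⟨d, hd⟩⟩, hmem ⟨d, hd⟩⟩ := by
    intro d
    induction d with
    | zero => intro hd; exact SimpleGraph.Reachable.refl _
    | succ e ih =>
      intro hd
      have he : e < L := Nat.lt_of_succ_lt hd
      refine (ih he).trans (SimpleGraph.Adj.reachable ?_)
      have hadj : (Fan N).Adj ⟨t + 1 + e, pf ⟨e, he⟩⟩ ⟨t + 1 + (e+1), pf ⟨e+1, hd⟩⟩ := by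
        rw [Fan, fromRel_adj]
        refine ⟨?_, Or.inl (Or.inr ?_)⟩
        · simp only [ne_eq, Fin.mk.injEq]
          omega
        · show t + 1 + e + 1 = t + 1 + (e + 1)
          omega
      exact hadj
  refine connected_of_hub _ ⟨⟨t + 1 + 0, pf ⟨0, hL⟩⟩, hmem ⟨0, hL⟩⟩ ?_
  rintro ⟨x, hx⟩
  simp only [hS, Finset.coe_image, Set.mem_image, Finset.mem_coe, Finset.mem_univ] at hx
  obtain ⟨d, _, rfl⟩ := hx
  exact hreach d.val d.isLt

lemma interval_bound {n : ℕ} (j : Fin n) (d : Fin (n ^ 3)) :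
    j.val * n ^ 3 + 1 + d.val < n ^ 4 + 1 := by
  have h2 : (j.val + 1) * n ^ 3 ≤ n * n ^ 3 := Nat.mul_le_mul_right _ j.isLt
  have h3 : n * n ^ 3 = n ^ 4 := by ring
  have h5 : (j.val + 1) * n ^ 3 = j.val * n ^ 3 + n ^ 3 := by ring
  have h4 : d.val < n ^ 3 := d.isLt
  linarith

/-- For `n ≥ 2` and `2 ≤ k ≤ n³`, every `(c+2)`-colouring of `G_{c+2}` has a
monochromatic component with at least `k` vertices. -/
theorem Gfam_lower (n k : ℕ) (hn : 2 ≤ n) (hk : 2 ≤ k) (hkn : k ≤ n ^ 3) :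
    ∀ c : ℕ, ∀ f : GVert n k c → Fin (c + 2),
      ∃ S : Finset (GVert n k c), IsMonochromatic f S ∧
        ((Gfam n k c).induce (S : Set (GVert n k c))).Connected ∧ k ≤ S.card := by
  intro c
  induction c with
  | zero =>
    intro f
    have hn0 : 0 < n := by omega
    have hm0 : 0 < n ^ 2 := pow_pos hn0 2
    have hL : 0 < n ^ 3 := pow_pos hn0 3
    set a : Fin 2 := f none with ha
    set A : Finset (GVert n k 0) :=
      Finset.univ.filter (fun x => x ≠ none ∧ f x = a) with hA
    have hAprop : ∀ x ∈ A, x ≠ none ∧ f x = f none := by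
      intro x hx
      rw [hA] at hx
      obtain ⟨-, h1, h2⟩ := Finset.mem_filter.mp hx
      exact ⟨h1, by rw [← ha]; exact h2⟩
    by_cases hbig : k - 1 ≤ A.card
    · obtain ⟨hmono, hconn, hcard⟩ :=
        cone_apex_case (G := Fan (n ^ 4)) f A hAprop
      exact ⟨_, hmono, hconn, le_of_le_of_eq (Nat.sub_le_iff_le_add.mp hbig) hcard.symm⟩
    · have hAcard : A.card ≤ k - 2 := by omega
      let idx : GVert n k 0 → Fin (n ^ 2) :=
        fun x => (Option.map Prod.fst x).getD ⟨0, hm0⟩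
      have hfiber : ∃ i : Fin (n ^ 2), (A.filter (fun x => idx x = i)).card ≤ n - 1 := by
        by_contra h
        push_neg at h
        have hsum : A.card = ∑ i : Fin (n ^ 2), (A.filter (fun x => idx x = i)).card :=
          Finset.card_eq_sum_card_fiberwise (fun x _ => Finset.mem_univ _)
        have hge : n ^ 2 * n ≤ A.card := by
          rw [hsum]
          calc n ^ 2 * n = ∑ _i : Fin (n ^ 2), n := by
                simp [Finset.sum_const, Finset.card_univ, mul_comm]
            _ ≤ ∑ i : Fin (n ^ 2), (A.filter (fun x => idx x = i)).card := by
                refine Finset.sum_le_sum fun i _ => ?_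
                have := h i
                omega
        have hpow : n ^ 2 * n = n ^ 3 := by ring
        omega
      obtain ⟨i, hB⟩ := hfiber
      have hgood : ∃ j : Fin n, ∀ d : Fin (n ^ 3),
          f (some (i, ⟨j.val * n ^ 3 + 1 + d.val, interval_bound j d⟩)) ≠ a := by
        by_contra h
        push_neg at h
        choose g hg using h
        have hmem : ∀ j : Fin n,
            (some (i, ⟨j.val * n ^ 3 + 1 + (g j).val, interval_bound j (g j)⟩) : GVert n k 0)
              ∈ A.filter (fun x => idx x = i) := by
          intro j
          refine Finset.mem_filter.mpr ⟨?_, rfl⟩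
          rw [hA]
          refine (Finset.mem_filter (s := Finset.univ) (p := fun x : GVert n k 0 => x ≠ none ∧ f x = a)).mpr ⟨Finset.mem_univ _, ?_, hg j⟩
          exact Option.some_ne_none _
        have hinj : Function.Injective (fun j : Fin n =>
            (some (i, ⟨j.val * n ^ 3 + 1 + (g j).val, interval_bound j (g j)⟩) : GVert n k 0)) := by
          intro j j' hjj
          have hpair := Option.some.inj hjj
          have hfin : (⟨j.val * n ^ 3 + 1 + (g j).val, interval_bound j (g j)⟩ : Fin (n ^ 4 + 1)) =
              ⟨j'.val * n ^ 3 + 1 + (g j').val, interval_bound j' (g j')⟩ :=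
            congrArg Prod.snd hpair
          have hval : j.val * n ^ 3 + 1 + (g j).val = j'.val * n ^ 3 + 1 + (g j').val :=
            congrArg Fin.val hfin
          have e1 : (n ^ 3 * j.val + (g j).val) / n ^ 3 = j.val := by
            rw [Nat.mul_add_div hL, Nat.div_eq_of_lt (g j).isLt, add_zero]
          have e2 : (n ^ 3 * j'.val + (g j').val) / n ^ 3 = j'.val := by
            rw [Nat.mul_add_div hL, Nat.div_eq_of_lt (g j').isLt, add_zero]
          have hval' : n ^ 3 * j.val + (g j).val = n ^ 3 * j'.val + (g j').val := by
            have hc1 : n ^ 3 * j.val = j.val * n ^ 3 := mul_comm _ _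
            have hc2 : n ^ 3 * j'.val = j'.val * n ^ 3 := mul_comm _ _
            linarith
          exact Fin.ext (by rw [← e1, ← e2, hval'])
        have hle : (Finset.univ : Finset (Fin n)).card ≤ (A.filter (fun x => idx x = i)).card :=
          Finset.card_le_card_of_injOn _ (fun j _ => hmem j) hinj.injOn
        rw [Finset.card_univ, Fintype.card_fin] at hle
        omega
      obtain ⟨j, hj⟩ := hgood
      have pf : ∀ d : Fin (n ^ 3), j.val * n ^ 3 + 1 + d.val < n ^ 4 + 1 :=
        fun d => interval_bound j d
      set I : Finset (Fin (n ^ 4 + 1)) :=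
        Finset.image (fun d : Fin (n ^ 3) =>
          (⟨j.val * n ^ 3 + 1 + d.val, pf d⟩ : Fin (n ^ 4 + 1))) Finset.univ with hI
      have hInotA : ∀ u ∈ I, f (some (i, u)) ≠ a := by
        intro u hu
        rw [hI] at hu
        simp only [Finset.mem_image, Finset.mem_univ, true_and] at hu
        obtain ⟨d, rfl⟩ := hu
        exact hj d
      have hsomeinj : Function.Injective
          (fun v : Fin (n ^ 4 + 1) => (some (i, v) : GVert n k 0)) := by
        intro u v huv
        exact congrArg Prod.snd (Option.some.inj huv)
      refine ⟨I.image (β := GVert n k 0) (fun v => (some (i, v) : GVert n k 0)), ?_, ?_, ?_⟩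
      · intro x hx y hy
        replace hx := Finset.mem_image.mp hx; replace hy := Finset.mem_image.mp hy
        obtain ⟨u, hu, rfl⟩ := hx
        obtain ⟨v, hv, rfl⟩ := hy
        have h2 : ∀ a' b b' : Fin 2, b ≠ a' → b' ≠ a' → b = b' := by decide
        exact h2 a _ _ (hInotA u hu) (hInotA v hv)
      · have hc := fan_interval_connected (n ^ 4) (j.val * n ^ 3) (n ^ 3) hL pf
        exact induce_image_connected (H := Gfam n k 0)
          (fun v => (some (i, v) : GVert n k 0)) (fun u v h => ⟨rfl, h⟩) I hc
      · rw [Finset.card_image_of_injective (β := GVert n k 0) _ hsomeinj, hI,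
          Finset.card_image_of_injective _ ?_, Finset.card_univ, Fintype.card_fin]
        · exact hkn
        · intro d d' hdd
          have := congrArg Fin.val hdd
          simp only at this
          exact Fin.ext (by omega)
  | succ c ih =>
    intro f
    set a : Fin (c + 1 + 2) := f none with ha
    set A : Finset (GVert n k (c + 1)) :=
      Finset.univ.filter (fun x => x ≠ none ∧ f x = a) with hA
    have hAprop : ∀ x ∈ A, x ≠ none ∧ f x = f none := by
      intro x hx
      rw [hA] at hx
      obtain ⟨-, h1, h2⟩ := Finset.mem_filter.mp hx
      exact ⟨h1, by rw [← ha]; exact h2⟩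
    by_cases hbig : k - 1 ≤ A.card
    · obtain ⟨hmono, hconn, hcard⟩ :=
        cone_apex_case (G := Gfam n k c) f A hAprop
      exact ⟨_, hmono, hconn, le_of_le_of_eq (Nat.sub_le_iff_le_add.mp hbig) hcard.symm⟩
    · have hfree : ∃ i : Fin (k - 1), ∀ v : GVert n k c, f (some (i, v)) ≠ a := by
        by_contra h
        push_neg at h
        choose g hg using h
        have hmem : ∀ i : Fin (k - 1), (some (i, g i) : GVert n k (c + 1)) ∈ A := by
          intro i
          rw [hA]
          exact (Finset.mem_filter (s := Finset.univ) (p := fun x : GVert n k (c + 1) => x ≠ none ∧ f x = a)).mpr ⟨Finset.mem_univ _, Option.some_ne_none _, hg i⟩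
        have hinj : Function.Injective
            (fun i : Fin (k - 1) => (some (i, g i) : GVert n k (c + 1))) := by
          intro i i' hii
          exact congrArg Prod.fst (Option.some.inj hii)
        have hle : (Finset.univ : Finset (Fin (k - 1))).card ≤ A.card :=
          Finset.card_le_card_of_injOn _ (fun i _ => hmem i) hinj.injOn
        rw [Finset.card_univ, Fintype.card_fin] at hle
        omega
      obtain ⟨i, hi⟩ := hfree
      set e : Fin (c + 2 + 1) ≃ Option (Fin (c + 2)) := finSuccEquiv' a with he
      have hsome : ∀ v : GVert n k c, ∃ b : Fin (c + 2), e (f (some (i, v))) = some b := by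
        intro v
        rcases h' : e (f (some (i, v))) with _ | b
        · exfalso
          apply hi v
          have := congrArg e.symm h'
          rw [Equiv.symm_apply_apply] at this
          rw [this, he]
          exact finSuccEquiv'_symm_none a
        · exact ⟨b, rfl⟩
      set f' : GVert n k c → Fin (c + 2) := fun v => (e (f (some (i, v)))).getD 0 with hf'def
      have hf' : ∀ u v, f' u = f' v → f (some (i, u)) = f (some (i, v)) := by
        intro u v huv
        obtain ⟨b, hb⟩ := hsome u
        obtain ⟨b', hb'⟩ := hsome v
        apply e.injective
        rw [hb, hb']
        rw [hf'def] at huv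
        simp only [hb, hb', Option.getD_some] at huv
        rw [huv]
      obtain ⟨S₀, hm₀, hc₀, hk₀⟩ := ih f'
      have hsomeinj : Function.Injective
          (fun v : GVert n k c => (some (i, v) : GVert n k (c + 1))) := by
        intro u v huv
        exact congrArg Prod.snd (Option.some.inj huv)
      refine ⟨S₀.image (β := GVert n k (c + 1)) (fun v => (some (i, v) : GVert n k (c + 1))), ?_, ?_, ?_⟩
      · intro x hx y hy
        replace hx := Finset.mem_image.mp hx; replace hy := Finset.mem_image.mp hy
        obtain ⟨u, hu, rfl⟩ := hx
        obtain ⟨v, hv, rfl⟩ := hy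
        exact hf' u v (hm₀ u hu v hv)
      · exact induce_image_connected (H := Gfam n k (c + 1))
          (fun v => (some (i, v) : GVert n k (c + 1))) (fun u v h => ⟨rfl, h⟩) S₀ hc₀
      · rw [Finset.card_image_of_injective (β := GVert n k (c + 1)) _ hsomeinj]
        exact hk₀
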